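/- Suppose j₁, j₂ ∈ K satisfy 3j₁ − 40j₂ ≠ 0 and j₁ ≠ 0, and set j₃ = h(j₁,j₂) := 3000 + j₁/400 + 41j₂/180 − (j₂/9)·(11j₂ − 1080000)/(3j₁ − 40j₂). Then 9j₁² + 700j₂j₁ − 3600j₃j₁ − 12400j₂² + 48000j₂j₃ + 10800000j₁ = 0; conversely, if (j₁,j₂,j₃) satisfies this equation with 3j₁ − 40j₂ ≠ 0 and j₁ ≠ 0, then j₃ = h(j₁,j₂). Thus the locus D = 0 is rationally parametrized by (j₁, j₂). -/

import Mathlib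

/-- The locus `D = 0` in the absolute Igusa invariants is rationally parametrized by
`j₃ = h(j₁, j₂)`: the parametrization satisfies the equation, and conversely any solution
with `3j₁ − 40j₂ ≠ 0` and `j₁ ≠ 0` is of this form. -/
theorem D_locus_rational_parametrization {K : Type*} [Field K] [CharZero K]
    (j1 j2 : K) (hden : 3 * j1 - 40 * j2 ≠ 0) (hj1 : j1 ≠ 0) :
    (∀ j3 : K,
      j3 = 3000 + j1 / 400 + 41 * j2 / 180
          - (j2 / 9) * (11 * j2 - 1080000) / (3 * j1 - 40 * j2) →
      9 * j1 ^ 2 + 700 * j2 * j1 - 3600 * j3 * j1 - 12400 * j2 ^ 2 + 48000 * j2 * j3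
          + 10800000 * j1 = 0) ∧
    (∀ j3 : K,
      9 * j1 ^ 2 + 700 * j2 * j1 - 3600 * j3 * j1 - 12400 * j2 ^ 2 + 48000 * j2 * j3
          + 10800000 * j1 = 0 →
      j3 = 3000 + j1 / 400 + 41 * j2 / 180
          - (j2 / 9) * (11 * j2 - 1080000) / (3 * j1 - 40 * j2)) := by
  constructor
  · intro j3 h
    subst h
    field_simp [show j1 * 3 - j2 * 40 ≠ 0 by contrapose! hden; linear_combination hden]
    ring
  · intro j3 h
    have h2 : (3600 * j1 - 48000 * j2) * j3
        = 9 * j1 ^ 2 + 700 * j2 * j1 - 12400 * j2 ^ 2 + 10800000 * j1 := by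
      linear_combination -h
    field_simp [show j1 * 3 - j2 * 40 ≠ 0 by contrapose! hden; linear_combination hden]
    linear_combination (540 : K) * h2
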